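/- arXiv:math/0403119 — 3 statements merged into one kernel-verified Lean document; each statement's English description precedes it below -/
import Mathlib

section
/- For every complex number s with Re(s) > 0 and every positive integer n, the function Φ_n(s) = ∫_{-∞}^{∞} F_n(x) e^{(s-1/2)x} dx equals 1 - (1 - 1/s)^n, where F_n(x) = e^{x/2} ∑_{j=1}^{n} C(n,j) x^{j-1}/(j-1)! for x < 0, F_n(0) = n/2, and F_n(x) = 0 for x > 0. -/
open MeasureTheory

/-- The test function `F_n` of Bombieri–Lagarias. -/
noncomputable def LiF (n : ℕ) (x : ℝ) : ℝ :=
  if x < 0 then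
    Real.exp (x / 2) * ∑ j ∈ Finset.Icc 1 n, (n.choose j : ℝ) * x ^ (j - 1) / (Nat.factorial (j - 1) : ℝ)
  else if x = 0 then n / 2 else 0

section Helpers
open Real Set Filter Topology Asymptotics

lemma tendsto_abs_pow_mul_exp_atBot {b : ℝ} (hb : 0 < b) (k : ℕ) :
    Tendsto (fun x : ℝ => |x| ^ k * Real.exp (b * x)) atBot (𝓝 0) := by
  have T : Tendsto (fun t : ℝ => |t| ^ k * Real.exp (-(b * t))) atTop (𝓝 0) := by
    have := tendsto_rpow_mul_exp_neg_mul_atTop_nhds_zero (k : ℝ) b hb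
    refine this.congr' ?_
    filter_upwards [eventually_ge_atTop (0:ℝ)] with t ht
    rw [Real.rpow_natCast, abs_of_nonneg ht, neg_mul]
  have := T.comp tendsto_neg_atBot_atTop
  refine this.congr fun x => ?_
  simp [Function.comp, mul_comm]

lemma expIic' {c : ℝ} (hc : 0 < c) :
    IntegrableOn (fun x : ℝ => Real.exp (c * x)) (Iic 0) := by
  refine integrableOn_Iic_of_intervalIntegral_norm_bounded (1/c) 0
    (fun y => ((Real.continuous_exp.comp (continuous_const.mul continuous_id)).integrableOn_Ioc)) tendsto_id ?_
  filter_upwards with y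
  have h1 : ∀ x, ‖Real.exp (c * x)‖ = Real.exp (c * x) := fun x => Real.norm_of_nonneg (Real.exp_pos _).le
  simp_rw [h1]
  rw [intervalIntegral.integral_comp_mul_left (fun u => Real.exp u) hc.ne']
  rw [integral_exp]
  rw [smul_eq_mul, mul_zero]
  rw [Real.exp_zero]
  have := Real.exp_pos (c * y)
  rw [one_div]
  have hci : 0 < c⁻¹ := by positivity
  nlinarith [Real.exp_pos (c * id y)]

lemma domIic {c : ℝ} (hc : 0 < c) (k : ℕ) :
    IntegrableOn (fun x : ℝ => |x| ^ k * Real.exp (c * x)) (Iic 0) := by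
  have hc2 : 0 < c / 2 := by positivity
  have ho : (fun x : ℝ => |x| ^ k * Real.exp (c * x)) =O[atBot]
      (fun x : ℝ => Real.exp (c / 2 * x)) := by
    have e : (fun x : ℝ => |x| ^ k * Real.exp (c * x))
        = fun x => (|x| ^ k * Real.exp (c / 2 * x)) * Real.exp (c / 2 * x) := by
      funext x
      rw [mul_assoc, ← Real.exp_add]
      ring_nf
    rw [e]
    simpa using ((tendsto_abs_pow_mul_exp_atBot hc2 k).isBigO_one ℝ).mul
      (isBigO_refl (fun x : ℝ => Real.exp (c / 2 * x)) atBot)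
  have hcont : Continuous (fun x : ℝ => |x| ^ k * Real.exp (c * x)) :=
    (continuous_abs.pow k).mul (Real.continuous_exp.comp (continuous_const.mul continuous_id))
  exact (hcont.continuousOn.locallyIntegrableOn measurableSet_Iic).integrableOn_of_isBigO_atBot
    ho ⟨Iic 0, Iic_mem_atBot 0, expIic' hc2⟩

lemma ckIic {s : ℂ} (hs : 0 < s.re) (k : ℕ) :
    IntegrableOn (fun x : ℝ => (x : ℂ) ^ k * Complex.exp (s * x)) (Iic 0) := by
  have hcont : Continuous (fun x : ℝ => (x : ℂ) ^ k * Complex.exp (s * x)) :=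
    (Complex.continuous_ofReal.pow k).mul
      (Complex.continuous_exp.comp (continuous_const.mul Complex.continuous_ofReal))
  refine (domIic hs k).mono' hcont.aestronglyMeasurable ?_
  filter_upwards with x
  rw [norm_mul, norm_pow, Complex.norm_real, Complex.norm_exp]
  simp [Real.norm_eq_abs, Complex.mul_re]

lemma tendstoC {s : ℂ} (hs : 0 < s.re) (m : ℕ) :
    Tendsto (fun x : ℝ => (x : ℂ) ^ m * Complex.exp (s * x)) atBot (𝓝 0) := by
  refine squeeze_zero_norm (fun x => ?_) (tendsto_abs_pow_mul_exp_atBot hs m)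
  rw [norm_mul, norm_pow, Complex.norm_real, Complex.norm_exp]
  simp [Real.norm_eq_abs, Complex.mul_re]

lemma keyStep {s : ℂ} (hs : 0 < s.re) (k : ℕ) :
    ∫ x in Iic (0:ℝ), ((k+1 : ℂ) * s⁻¹ * ((x:ℂ)^k * Complex.exp (s * x))
      + (x:ℂ)^(k+1) * Complex.exp (s * x)) = 0 := by
  have hs0 : s ≠ 0 := fun h => by simp [h] at hs
  have hF : ∀ x : ℝ, HasDerivAt (fun y : ℝ => ((y:ℂ))^(k+1) * Complex.exp (s * y) * s⁻¹)
      (((k+1 : ℂ) * (x:ℂ)^k * Complex.exp (s * x)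
        + (x:ℂ)^(k+1) * (Complex.exp (s * x) * s)) * s⁻¹) x := by
    intro x
    have h1 : HasDerivAt (fun z : ℂ => z^(k+1) * Complex.exp (s * z) * s⁻¹)
        (((k+1 : ℂ) * (x:ℂ)^k * Complex.exp (s * x)
          + (x:ℂ)^(k+1) * (Complex.exp (s * x) * s)) * s⁻¹) (x:ℂ) := by
      have hp := hasDerivAt_pow (k+1) (x:ℂ)
      have he : HasDerivAt (fun z : ℂ => Complex.exp (s * z)) (Complex.exp (s * (x:ℂ)) * s) (x:ℂ) :=
        by simpa using ((hasDerivAt_id (x:ℂ)).const_mul s).cexp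
      have := (hp.mul he).mul_const s⁻¹
      refine this.congr_deriv ?_
      push_cast
      ring
    exact h1.comp_ofReal
  have hInt : IntegrableOn (fun x : ℝ => ((k+1 : ℂ) * (x:ℂ)^k * Complex.exp (s * x)
        + (x:ℂ)^(k+1) * (Complex.exp (s * x) * s)) * s⁻¹) (Iic (0:ℝ)) := by
    have h1 := ((ckIic hs k).const_mul ((k+1 : ℂ) * s⁻¹)).add (ckIic hs (k+1))
    refine h1.congr (EventuallyEq.symm ?_)
    filter_upwards with x
    simp only [Pi.add_apply]
    field_simp
  have hT : Tendsto (fun y : ℝ => ((y:ℂ))^(k+1) * Complex.exp (s * y) * s⁻¹) atBot (𝓝 0) := by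
    simpa using (tendstoC hs (k+1)).mul_const s⁻¹
  have := integral_Iic_of_hasDerivAt_of_tendsto' (a := 0) (fun x _ => hF x) hInt hT
  rw [show ((0:ℝ):ℂ)^(k+1) * Complex.exp (s * (0:ℝ)) * s⁻¹ = 0 by simp, sub_zero] at this
  rw [← this]
  refine setIntegral_congr_fun measurableSet_Iic (fun x _ => ?_)
  field_simp

lemma keyVal {s : ℂ} (hs : 0 < s.re) (k : ℕ) :
    ∫ x in Iic (0:ℝ), (x:ℂ)^k * Complex.exp (s * x)
      = (-1)^k * (k.factorial : ℂ) / s^(k+1) := by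
  have hs0 : s ≠ 0 := fun h => by simp [h] at hs
  induction k with
  | zero =>
    have hF : ∀ x : ℝ, HasDerivAt (fun y : ℝ => Complex.exp (s * y) * s⁻¹)
        (Complex.exp (s * x)) x := by
      intro x
      have h1 : HasDerivAt (fun z : ℂ => Complex.exp (s * z) * s⁻¹)
          (Complex.exp (s * (x:ℂ))) (x:ℂ) := by
        have he : HasDerivAt (fun z : ℂ => Complex.exp (s * z))
            (Complex.exp (s * (x:ℂ)) * s) (x:ℂ) := by
          simpa using ((hasDerivAt_id (x:ℂ)).const_mul s).cexp
        have := he.mul_const s⁻¹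
        refine this.congr_deriv ?_
        field_simp
      exact h1.comp_ofReal
    have hInt : IntegrableOn (fun x : ℝ => Complex.exp (s * x)) (Iic (0:ℝ)) := by
      have := ckIic hs 0
      simpa using this
    have hT : Tendsto (fun y : ℝ => Complex.exp (s * y) * s⁻¹) atBot (𝓝 0) := by
      simpa using (tendstoC hs 0).mul_const s⁻¹
    have := integral_Iic_of_hasDerivAt_of_tendsto' (a := 0) (fun x _ => hF x) hInt hT
    simp only [Complex.ofReal_zero, mul_zero, Complex.exp_zero, one_mul, sub_zero] at this
    simp only [pow_zero, one_mul]
    rw [this]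
    simp [Nat.factorial]
  | succ k ih =>
    have h0 := keyStep hs k
    rw [integral_add ((ckIic hs k).const_mul ((k+1 : ℂ) * s⁻¹)) (ckIic hs (k+1)),
      MeasureTheory.integral_const_mul, ih] at h0
    have : ∫ x in Iic (0:ℝ), (x:ℂ)^(k+1) * Complex.exp (s * x)
        = -((k+1 : ℂ) * s⁻¹ * ((-1)^k * (k.factorial : ℂ) / s^(k+1))) := by
      linear_combination h0
    rw [this]
    rw [Nat.factorial_succ]
    push_cast
    field_simp
    ring


end Helpers

open Real Set Filter Topology Asymptotics in
/-- Lemma 2.4: for `Re s > 0`, `Φ_n(s) = ∫ F_n(x) e^{(s-1/2)x} dx = 1 - (1 - 1/s)^n`. -/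
theorem stmt0 (n : ℕ) (hn : 1 ≤ n) (s : ℂ) (hs : 0 < s.re) :
    ∫ x : ℝ, (LiF n x : ℂ) * Complex.exp ((s - 1 / 2) * x) = 1 - (1 - 1 / s) ^ n := by
  have hs0 : s ≠ 0 := fun h => by simp [h] at hs
  have hsupp : ∀ x ∉ Iic (0:ℝ), (LiF n x : ℂ) * Complex.exp ((s - 1/2) * x) = 0 := by
    intro x hx
    have hx' : 0 < x := not_le.mp (by simpa using hx)
    simp [LiF, not_lt.mpr hx'.le, hx'.ne']
  rw [← setIntegral_eq_integral_of_forall_compl_eq_zero hsupp]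
  rw [integral_Iic_eq_integral_Iio]
  have hcong : ∀ x ∈ Iio (0:ℝ), (LiF n x : ℂ) * Complex.exp ((s - 1/2)*x)
      = ∑ j ∈ Finset.Icc 1 n,
        ((n.choose j : ℂ) / ((j-1).factorial : ℂ)) * ((x:ℂ)^(j-1) * Complex.exp (s * x)) := by
    intro x hx
    have hx : x < 0 := hx
    have hkey : Complex.exp ((x:ℂ)/2) * Complex.exp ((s - 1/2) * x) = Complex.exp (s * x) := by
      rw [← Complex.exp_add]
      congr 1
      ring
    rw [LiF, if_pos hx]
    push_cast
    rw [mul_comm (Complex.exp ((x:ℂ)/2)) _, mul_assoc, hkey, Finset.sum_mul]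
    refine Finset.sum_congr rfl fun j _ => ?_
    ring
  rw [setIntegral_congr_fun measurableSet_Iio hcong]
  rw [integral_finset_sum _ (fun j _ =>
    ((ckIic hs (j-1)).mono_set Iio_subset_Iic_self).const_mul _)]
  simp_rw [MeasureTheory.integral_const_mul]
  have hval : ∀ j ∈ Finset.Icc 1 n,
      ((n.choose j : ℂ) / ((j-1).factorial : ℂ)) *
        ∫ x in Iio (0:ℝ), (x:ℂ)^(j-1) * Complex.exp (s * x)
      = -((n.choose j : ℂ) * (-(1/s))^j) := by
    intro j hj
    obtain ⟨i, rfl⟩ : ∃ i, j = i + 1 :=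
      ⟨j - 1, (Nat.succ_pred_eq_of_pos (Finset.mem_Icc.mp hj).1).symm⟩
    rw [← integral_Iic_eq_integral_Iio, keyVal hs]
    simp only [Nat.add_sub_cancel]
    have hfac : ((i.factorial : ℂ)) ≠ 0 := Nat.cast_ne_zero.mpr i.factorial_ne_zero
    field_simp
    have hp : s^(i+1) * (-(1/s))^(i+1) = (-1)^(i+1) := by
      rw [← mul_pow, mul_neg, mul_one_div_cancel hs0]
    rw [mul_assoc, hp]
    ring
  rw [Finset.sum_congr rfl hval]
  have hbin : (1 - 1/s)^n = ∑ k ∈ Finset.range (n+1), (-(1/s))^k * (n.choose k : ℂ) := by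
    rw [sub_eq_add_neg, add_comm, add_pow]
    simp
  rw [hbin, Finset.sum_range_succ']
  simp only [pow_zero, Nat.choose_zero_right, Nat.cast_one, one_mul]
  rw [show Finset.Icc 1 n = Finset.Ico 1 (n+1) from (Finset.Ico_add_one_right_eq_Icc 1 n).symm]
  rw [Finset.sum_Ico_eq_sum_range]
  simp only [Nat.add_sub_cancel]
  rw [show (1:ℂ) - (∑ k ∈ Finset.range n, (-(1/s))^(k+1) * (n.choose (k+1):ℂ) + 1)
      = -∑ k ∈ Finset.range n, (-(1/s))^(k+1) * (n.choose (k+1):ℂ) by ring]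
  rw [← Finset.sum_neg_distrib]
  refine Finset.sum_congr rfl fun i _ => ?_
  rw [add_comm 1 i]
  ring
end

section
/- Let p be a prime, α a complex number with |α| ≤ 1, and set s = 1/(1-z). Then for z in a sufficiently small neighborhood of 0, d/dz [log(1 - α p^{-s})] = ∑_{n=0}^{∞} c_n z^n where c_n = ∑_{j=0}^{n} C(n+1, j+1) ((-1)^j / j!) ∑_{m=1}^{∞} (log p / p^m) α^m (log p^m)^j. -/
noncomputable def auxV (p : ℕ) (α : ℂ) (j m : ℕ) : ℂ :=
  ((Real.log p : ℂ) / (p:ℂ)^(m+1)) * α^(m+1) * (((m+1 : ℕ) : ℂ) * (Real.log p : ℂ))^j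

noncomputable def auxU (p : ℕ) (α z : ℂ) (m j k : ℕ) : ℂ :=
  ((-1)^j / (j.factorial : ℂ)) * (((k+j+1).choose (j+1) : ℕ) : ℂ) * z^(j+k) * auxV p α j m

lemma hasSum_auxU_k (p : ℕ) (α : ℂ) {z : ℂ} (hz : ‖z‖ < 1) (m j : ℕ) :
    HasSum (fun k => auxU p α z m j k)
      (((-1)^j / (j.factorial:ℂ)) * (z^j / (1-z)^(j+2)) * auxV p α j m) := by
  have hb := (hasSum_choose_mul_geometric_of_norm_lt_one (𝕜 := ℂ) (j+1) hz).mul_left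
    (((-1)^j / (j.factorial:ℂ)) * z^j * auxV p α j m)
  have heq : (fun k => ((-1)^j / (j.factorial:ℂ)) * z^j * auxV p α j m *
      ((((k + (j+1)).choose (j+1) : ℕ) : ℂ) * z^k)) = fun k => auxU p α z m j k := by
    funext k
    rw [auxU, ← add_assoc, pow_add]
    ring
  rw [heq] at hb
  convert hb using 1
  · rfl
  ring

lemma hasSum_auxU_j (p : ℕ) (hp : 0 < p) (α : ℂ) {z : ℂ} (h1z : (1:ℂ) - z ≠ 0) (m : ℕ) :
    HasSum (fun j => ((-1)^j / (j.factorial:ℂ)) * (z^j / (1-z)^(j+2)) * auxV p α j m)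
      ((Real.log p : ℂ) / (1-z)^2 *
        (α * Complex.exp (-(1/(1-z)) * (Real.log p : ℂ)))^(m+1)) := by
  have hp0 : (0:ℝ) < p := by exact_mod_cast hp
  set L : ℂ := (Real.log p : ℂ) with hL
  set y : ℂ := ((m+1:ℕ):ℂ) * ((-1) * L * z / (1-z)) with hy
  have he := (NormedSpace.expSeries_div_hasSum_exp y).mul_left
    ((L / (p:ℂ)^(m+1)) * α^(m+1) / (1-z)^2)
  rw [← Complex.exp_eq_exp_ℂ] at he
  have heq : (fun j => (L / (p:ℂ)^(m+1)) * α^(m+1) / (1-z)^2 * (y^j / (j.factorial:ℂ))) =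
      fun j => ((-1)^j / (j.factorial:ℂ)) * (z^j / (1-z)^(j+2)) * auxV p α j m := by
    funext j
    rw [auxV, hy]
    generalize (1:ℂ) - z = w
    simp only [mul_pow, div_pow]
    ring
  rw [heq] at he
  convert he using 1
  · rfl
  have hpe : (p:ℂ)^(m+1) = Complex.exp (((m+1:ℕ):ℂ) * L) := by
    rw [Complex.exp_nat_mul]
    congr 1
    rw [hL, ← Complex.ofReal_exp, Real.exp_log hp0]
    norm_cast
  have harg : y - ((m+1:ℕ):ℂ) * L = ((m+1:ℕ):ℂ) * (-(1/(1-z)) * L) := by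
    rw [hy]
    apply mul_right_cancel₀ h1z
    field_simp
    ring
  have h2 : Complex.exp y / (p:ℂ)^(m+1) = Complex.exp (((m+1:ℕ):ℂ) * (-(1/(1-z)) * L)) := by
    rw [hpe, ← Complex.exp_sub, harg]
  rw [mul_pow, ← Complex.exp_nat_mul, ← h2]
  ring

noncomputable def auxUb (p : ℕ) (a t : ℝ) (m j k : ℕ) : ℝ :=
  (1 / j.factorial) * ((k+j+1).choose (j+1)) * t^(j+k) *
    ((Real.log p / (p:ℝ)^(m+1)) * a^(m+1) * (((m+1:ℕ):ℝ) * Real.log p)^j)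

lemma hasSum_auxUb_k (p : ℕ) (a : ℝ) {t : ℝ} (ht0 : 0 ≤ t) (ht1 : t < 1) (m j : ℕ) :
    HasSum (fun k => auxUb p a t m j k)
      ((1 / j.factorial) * (t^j / (1-t)^(j+2)) *
        ((Real.log p / (p:ℝ)^(m+1)) * a^(m+1) * (((m+1:ℕ):ℝ) * Real.log p)^j)) := by
  have hnt : ‖t‖ < 1 := by rwa [Real.norm_eq_abs, abs_of_nonneg ht0]
  have hb := (hasSum_choose_mul_geometric_of_norm_lt_one (𝕜 := ℝ) (j+1) hnt).mul_left
    ((1 / j.factorial) * t^j * ((Real.log p / (p:ℝ)^(m+1)) * a^(m+1) * (((m+1:ℕ):ℝ) * Real.log p)^j))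
  have heq : (fun k => (1 / j.factorial) * t^j *
        ((Real.log p / (p:ℝ)^(m+1)) * a^(m+1) * (((m+1:ℕ):ℝ) * Real.log p)^j) *
        (((k + (j+1)).choose (j+1) : ℕ) * t^k)) = fun k => auxUb p a t m j k := by
    funext k
    rw [auxUb, ← add_assoc, pow_add]
    ring
  rw [heq] at hb
  convert hb using 1
  · rfl
  ring

lemma hasSum_auxUb_j (p : ℕ) (a : ℝ) {t : ℝ} (ht0 : 0 ≤ t) (ht1 : t < 1) (m : ℕ) :
    HasSum (fun j => (1 / (j.factorial:ℝ)) * (t^j / (1-t)^(j+2)) *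
        ((Real.log p / (p:ℝ)^(m+1)) * a^(m+1) * (((m+1:ℕ):ℝ) * Real.log p)^j))
      ((Real.log p / (p:ℝ)^(m+1)) * a^(m+1) / (1-t)^2 *
        Real.exp (((m+1:ℕ):ℝ) * (Real.log p * t / (1-t)))) := by
  have h1t : (0:ℝ) < 1 - t := by linarith
  have he := (NormedSpace.expSeries_div_hasSum_exp
      (((m+1:ℕ):ℝ) * (Real.log p * t / (1-t)))).mul_left
      ((Real.log p / (p:ℝ)^(m+1)) * a^(m+1) / (1-t)^2)
  rw [← Real.exp_eq_exp_ℝ] at he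
  convert he using 1
  · rfl
  funext j
  rw [mul_pow, mul_pow, div_pow, pow_add]
  field_simp [h1t.ne']
  ring

lemma summable_pair_auxUb (p : ℕ) (hp : 1 ≤ p) {a t : ℝ} (ha0 : 0 ≤ a) (ht0 : 0 ≤ t) (ht1 : t < 1) (m : ℕ) :
    Summable (fun jk : ℕ × ℕ => auxUb p a t m jk.1 jk.2) := by
  have hL0 : 0 ≤ Real.log p := Real.log_nonneg (by exact_mod_cast hp)
  rw [summable_prod_of_nonneg (fun jk => by
    show (0:ℝ) ≤ auxUb p a t m jk.1 jk.2
    unfold auxUb; positivity)]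
  constructor
  · intro j; exact (hasSum_auxUb_k p a ht0 ht1 m j).summable
  · have : (fun j => ∑' k, auxUb p a t m j k) = fun j => (1 / (j.factorial:ℝ)) *
        (t^j / (1-t)^(j+2)) *
        ((Real.log p / (p:ℝ)^(m+1)) * a^(m+1) * (((m+1:ℕ):ℝ) * Real.log p)^j) :=
      funext fun j => (hasSum_auxUb_k p a ht0 ht1 m j).tsum_eq
    rw [this]
    exact (hasSum_auxUb_j p a ht0 ht1 m).summable

lemma tsum_pair_auxUb (p : ℕ) (hp : 1 ≤ p) {a t : ℝ} (ha0 : 0 ≤ a) (ht0 : 0 ≤ t) (ht1 : t < 1) (m : ℕ) :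
    ∑' jk : ℕ × ℕ, auxUb p a t m jk.1 jk.2 =
      (Real.log p / (p:ℝ)^(m+1)) * a^(m+1) / (1-t)^2 *
        Real.exp (((m+1:ℕ):ℝ) * (Real.log p * t / (1-t))) := by
  rw [Summable.tsum_prod' (summable_pair_auxUb p hp ha0 ht0 ht1 m)
    (fun j => (hasSum_auxUb_k p a ht0 ht1 m j).summable)]
  rw [← (hasSum_auxUb_j p a ht0 ht1 m).tsum_eq]
  exact tsum_congr fun j => (hasSum_auxUb_k p a ht0 ht1 m j).tsum_eq

lemma summable_auxUb (p : ℕ) (hp : 1 < p) {a t : ℝ} (ha0 : 0 ≤ a) (ha : a ≤ 1)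
    (ht0 : 0 ≤ t) (ht : t < 1/2) :
    Summable (fun x : ℕ × ℕ × ℕ => auxUb p a t x.1 x.2.1 x.2.2) := by
  have ht1 : t < 1 := by linarith
  have h1t : (0:ℝ) < 1 - t := by linarith
  have hp0 : (0:ℝ) < p := by positivity
  have hL : 0 < Real.log p := Real.log_pos (by exact_mod_cast hp)
  have hc : Real.log ↑p * t / (1-t) < Real.log ↑p := by
    rw [div_lt_iff₀ h1t]; nlinarith
  rw [summable_prod_of_nonneg (fun x => by
    show (0:ℝ) ≤ auxUb p a t x.1 x.2.1 x.2.2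
    unfold auxUb; positivity)]
  refine ⟨fun m => summable_pair_auxUb p hp.le ha0 ht0 ht1 m, ?_⟩
  have heq : (fun m => ∑' jk : ℕ × ℕ, auxUb p a t m jk.1 jk.2) =
      fun m => (Real.log p / (1-t)^2 * (a * Real.exp (Real.log p * t / (1-t)) / p)) *
        (a * Real.exp (Real.log p * t / (1-t)) / p)^m := by
    funext m
    rw [tsum_pair_auxUb p hp.le ha0 ht0 ht1 m, Real.exp_nat_mul]
    rw [div_pow, mul_pow]
    field_simp
    ring
  rw [heq]
  apply Summable.mul_left
  apply summable_geometric_of_lt_one (by positivity)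
  rw [div_lt_one hp0]
  calc a * Real.exp (Real.log p * t / (1-t)) ≤ 1 * Real.exp (Real.log p * t / (1-t)) := by
        apply mul_le_mul_of_nonneg_right ha (Real.exp_nonneg _)
    _ < p := by
        rw [one_mul]
        calc Real.exp (Real.log ↑p * t / (1-t)) < Real.exp (Real.log ↑p) :=
              Real.exp_lt_exp.mpr hc
          _ = p := Real.exp_log hp0

-- abs lemma
lemma abs_auxU (p : ℕ) (hp : 1 ≤ p) (α z : ℂ) (m j k : ℕ) :
    ‖auxU p α z m j k‖ = auxUb p ‖α‖ ‖z‖ m j k := by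
  have hL : 0 ≤ Real.log p := Real.log_nonneg (by exact_mod_cast hp)
  have h1 : ‖(-1:ℂ)‖ = 1 := by simp
  simp only [auxU, auxV, auxUb, norm_mul, norm_div, norm_pow, Complex.norm_natCast,
    Complex.norm_real, Real.norm_eq_abs, h1, one_pow]
  rw [abs_of_nonneg hL]

/-- Lemma 3.5: with `s = 1/(1-z)`,
`d/dz log(1 - α p^{-s}) = ∑_{n≥0} (∑_{j=0}^n C(n+1,j+1) ((-1)^j/j!) ∑_{m≥1} (log p / p^m) α^m (log p^m)^j) zⁿ`
for `z` in a small neighborhood of the origin. -/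
theorem stmt3 (p : ℕ) (hp : p.Prime) (α : ℂ) (hα : ‖α‖ ≤ 1) :
    ∃ r > 0, ∀ z : ℂ, ‖z‖ < r →
      HasSum
        (fun n : ℕ =>
          (∑ j ∈ Finset.range (n + 1), ((n + 1).choose (j + 1) : ℂ) *
              ((-1) ^ j / (Nat.factorial j : ℂ)) *
              ∑' m : ℕ, (Real.log p / (p : ℂ) ^ (m + 1)) * α ^ (m + 1) *
                (Real.log ((p : ℝ) ^ (m + 1)) : ℂ) ^ j) * z ^ n)
        (deriv (fun w : ℂ =>
          Complex.log (1 - α * Complex.exp (-(1 / (1 - w)) * Real.log p))) z) := by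
  refine ⟨1/2, by norm_num, fun z hz => ?_⟩
  have hp1 : 1 < p := hp.one_lt
  have hp0 : 0 < p := hp.pos
  have hpr0 : (0:ℝ) < p := by exact_mod_cast hp0
  have hL : 0 < Real.log p := Real.log_pos (by exact_mod_cast hp1)
  have hz1 : ‖z‖ < 1 := by linarith
  have hzn : ‖z‖ < 1 := by exact hz1
  have h1z : (1:ℂ) - z ≠ 0 := by
    intro h
    rw [sub_eq_zero] at h
    rw [← h] at hz1
    simp at hz1
  set L : ℂ := (Real.log p : ℂ) with hLdef
  set Q : ℂ := α * Complex.exp (-(1 / (1 - z)) * L) with hQdef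
  -- |Q| < 1
  have hsre : 0 < (1/(1-z)).re := by
    rw [one_div, Complex.inv_re]
    apply div_pos
    · rw [Complex.sub_re, Complex.one_re]
      have := Complex.re_le_norm z
      linarith
    · exact Complex.normSq_pos.mpr h1z
  have hQabs : ‖Q‖ < 1 := by
    rw [hQdef, norm_mul, Complex.norm_exp]
    have hre : (-(1/(1-z)) * L).re = -((1/(1-z)).re * Real.log p) := by
      rw [Complex.mul_re, hLdef]
      simp only [Complex.ofReal_re, Complex.ofReal_im, mul_zero, sub_zero, Complex.neg_re,
        Complex.neg_im]
      ring
    rw [hre]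
    calc ‖α‖ * Real.exp (-((1/(1-z)).re * Real.log p))
        ≤ 1 * Real.exp (-((1/(1-z)).re * Real.log p)) :=
          mul_le_mul_of_nonneg_right hα (Real.exp_nonneg _)
      _ < 1 := by
          rw [one_mul, Real.exp_lt_one_iff]
          nlinarith
  have hQre : Q.re < 1 := lt_of_le_of_lt (Complex.re_le_norm Q) hQabs
  have h1Q : (1:ℂ) - Q ≠ 0 := by
    intro h
    rw [sub_eq_zero] at h
    have : (1:ℂ).re = Q.re := by rw [h]
    simp at this
    linarith
  have hslit : (1:ℂ) - Q ∈ Complex.slitPlane := by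
    rw [Complex.mem_slitPlane_iff]
    left
    rw [Complex.sub_re, Complex.one_re]
    linarith
  -- the sum value
  set S : ℂ := (L/(1-z)^2 * Q) * (1-Q)⁻¹ with hSdef
  have hm : HasSum (fun m => L/(1-z)^2 * Q^(m+1)) S := by
    have hg := (hasSum_geometric_of_norm_lt_one (ξ := Q)
      (by exact hQabs)).mul_left (L/(1-z)^2 * Q)
    have heq : (fun m => L/(1-z)^2 * Q * Q^m) = fun m => L/(1-z)^2 * Q^(m+1) := by
      funext m
      rw [pow_succ]
      ring
    rwa [heq] at hg
  -- summability of the triple family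
  have hGnorm : Summable (fun x : ℕ × ℕ × ℕ => ‖auxU p α z x.1 x.2.1 x.2.2‖) := by
    refine (summable_auxUb p hp1 (norm_nonneg α) hα (norm_nonneg z) hz).congr
      fun x => ?_
    rw [← abs_auxU p hp1.le α z x.1 x.2.1 x.2.2]
  have hG : Summable (fun x : ℕ × ℕ × ℕ => auxU p α z x.1 x.2.1 x.2.2) := hGnorm.of_norm
  -- total sum equals S
  have htsum : ∑' x : ℕ × ℕ × ℕ, auxU p α z x.1 x.2.1 x.2.2 = S := by
    rw [Summable.tsum_prod' hG (fun m => hG.prod_factor m)]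
    have hin : ∀ m, ∑' (j : ℕ) (k : ℕ), auxU p α z m j k = L/(1-z)^2 * Q^(m+1) := by
      intro m
      rw [← (hasSum_auxU_j p hp0 α h1z m).tsum_eq]
      exact tsum_congr fun j => (hasSum_auxU_k p α hzn m j).tsum_eq
    calc ∑' (m : ℕ) (jk : ℕ × ℕ), auxU p α z m jk.1 jk.2
        = ∑' (m : ℕ), L/(1-z)^2 * Q^(m+1) := by
          apply tsum_congr
          intro m
          rw [Summable.tsum_prod' (hG.prod_factor m) (fun j => (hG.prod_factor m).prod_factor j)]
          exact hin m
      _ = S := hm.tsum_eq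
  have hGS : HasSum (fun x : ℕ × ℕ × ℕ => auxU p α z x.1 x.2.1 x.2.2) S :=
    htsum ▸ hG.hasSum
  -- swap to pair-first
  have hG2 : HasSum (fun x : (ℕ × ℕ) × ℕ => auxU p α z x.2 x.1.1 x.1.2) S := by
    have := (Equiv.prodComm (ℕ × ℕ) ℕ).hasSum_iff
      (f := fun x : ℕ × ℕ × ℕ => auxU p α z x.1 x.2.1 x.2.2) (a := S)
    exact this.2 hGS
  have hD : HasSum (fun jk : ℕ × ℕ => ∑' m, auxU p α z m jk.1 jk.2) S :=
    hG2.prod_fiberwise (fun jk => (hG2.summable.prod_factor jk).hasSum)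
  -- regroup along antidiagonals
  have hsig : HasSum (fun n => ∑ jk ∈ Finset.HasAntidiagonal.antidiagonal n, ∑' m, auxU p α z m jk.1 jk.2) S := by
    have he : HasSum ((fun jk : ℕ × ℕ => ∑' m, auxU p α z m jk.1 jk.2) ∘
        (Finset.HasAntidiagonal.sigmaAntidiagonalEquivProd (A := ℕ))) S :=
      (Equiv.hasSum_iff _).2 hD
    have hs := he.sigma (fun n => hasSum_fintype
      (fun c : Finset.HasAntidiagonal.antidiagonal n => ((fun jk : ℕ × ℕ => ∑' m, auxU p α z m jk.1 jk.2) ∘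
        (Finset.HasAntidiagonal.sigmaAntidiagonalEquivProd (A := ℕ))) ⟨n, c⟩))
    refine hs.congr_fun fun n => ?_
    exact (Finset.sum_coe_sort (Finset.HasAntidiagonal.antidiagonal n)
      (fun jk : ℕ × ℕ => ∑' m, auxU p α z m jk.1 jk.2)).symm
  -- identify coefficients
  have hcoeff : (fun n : ℕ =>
      (∑ j ∈ Finset.range (n + 1), ((n + 1).choose (j + 1) : ℂ) *
          ((-1) ^ j / (Nat.factorial j : ℂ)) *
          ∑' m : ℕ, (Real.log p / (p : ℂ) ^ (m + 1)) * α ^ (m + 1) *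
            (Real.log ((p : ℝ) ^ (m + 1)) : ℂ) ^ j) * z ^ n) =
      fun n => ∑ jk ∈ Finset.HasAntidiagonal.antidiagonal n, ∑' m, auxU p α z m jk.1 jk.2 := by
    funext n
    rw [Finset.Nat.sum_antidiagonal_eq_sum_range_succ_mk, Finset.sum_mul]
    apply Finset.sum_congr rfl
    intro j hj
    rw [Finset.mem_range] at hj
    have hj' : j ≤ n := by omega
    have hterm : ∀ m, auxU p α z m j (n - j) =
        (((-1):ℂ)^j / (Nat.factorial j : ℂ) * ((n+1).choose (j+1) : ℕ) * z^n) *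
          auxV p α j m := by
      intro m
      rw [auxU, show n - j + j + 1 = n + 1 from by omega, show j + (n - j) = n from by omega]
    rw [tsum_congr hterm, tsum_mul_left]
    have hT : (∑' m : ℕ, (L / (p : ℂ) ^ (m + 1)) * α ^ (m + 1) *
        (Real.log ((p : ℝ) ^ (m + 1)) : ℂ) ^ j) = ∑' m, auxV p α j m := by
      apply tsum_congr
      intro m
      rw [auxV, hLdef]
      congr 2
      rw [Real.log_pow]
      push_cast
      ring
    rw [hT]
    push_cast
    ring
  rw [hcoeff]
  -- compute the derivative
  have hfuneq : (fun w : ℂ => Complex.log (1 - α * Complex.exp (-(1 / (1 - w)) * L))) =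
      fun w : ℂ => Complex.log (1 - α * Complex.exp (-((1 - w)⁻¹) * L)) := by
    funext w
    rw [one_div]
  have h0 : HasDerivAt (fun w : ℂ => 1 - w) (-1) z := (hasDerivAt_id z).const_sub 1
  have h1 : HasDerivAt (fun w : ℂ => (1 - w)⁻¹) (-(-1)/(1-z)^2) z := h0.inv h1z
  have h2 : HasDerivAt (fun w : ℂ => -((1 - w)⁻¹) * L) (-(-(-1)/(1-z)^2) * L) z :=
    h1.neg.mul_const L
  have h3 := h2.cexp
  have h4 := h3.const_mul α
  have h5 := h4.const_sub 1
  have hgz : (1:ℂ) - α * Complex.exp (-((1 - z)⁻¹) * L) = 1 - Q := by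
    rw [hQdef, one_div]
  have hlog : HasDerivAt Complex.log ((1 - Q)⁻¹) (1 - α * Complex.exp (-((1 - z)⁻¹) * L)) := by
    rw [hgz]
    exact Complex.hasDerivAt_log hslit
  have h6 := hlog.comp z h5
  have hdval : deriv (fun w : ℂ =>
      Complex.log (1 - α * Complex.exp (-(1 / (1 - w)) * L))) z =
      (1 - Q)⁻¹ * -(α * (Complex.exp (-((1 - z)⁻¹) * L) * (-(-(-1)/(1-z)^2) * L))) := by
    rw [hfuneq]
    exact h6.deriv
  have hvalS : (1 - Q)⁻¹ * -(α * (Complex.exp (-((1 - z)⁻¹) * L) * (-(-(-1:ℂ)/(1-z)^2) * L))) =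
      S := by
    rw [hSdef, hQdef, one_div]
    ring
  rw [hdval, hvalS]
  exact hsig
end

section
/- For every positive integer m, every prime p, and every positive integer k, the n-th derivative at z = 0 of the function z ↦ (1-z)^{-m} p^{-k/(1-z)} equals p^{-k} ∑_{j=0}^{n} C(n,j) (n+m-1)(n+m-2)⋯(j+m) (-k log p)^j, where the empty product (when j = n) is interpreted as 1. -/
open Finset

noncomputable def FF (a : ℂ) (m n : ℕ) (z : ℂ) : ℂ :=
  ∑ j ∈ Finset.range (n + 1),
    (n.choose j : ℂ) * (∏ i ∈ Finset.Ico (j + m) (n + m), (i : ℂ)) *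
      (1 - z) ^ (-((m : ℤ) + n + j)) * a ^ j * Complex.exp (a / (1 - z))

lemma nat_key (n j : ℕ) (hj : j < n) :
    (n + 1).choose (j + 1) * (n + m) =
      n.choose (j + 1) * (m + n + (j + 1)) + n.choose j * (j + m) := by
  have h1 : n.choose (j + 1) * (j + 1) = n.choose j * (n - j) := Nat.choose_succ_right_eq n j
  have h2 : n - j + j = n := Nat.sub_add_cancel hj.le
  rw [Nat.choose_succ_succ]
  nlinarith [h1, h2]

lemma sum_id (n : ℕ) (u v w X : ℕ → ℂ)
    (h0 : u 0 = v 0) (hlast : u (n + 1) = w n)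
    (hmid : ∀ j < n, u (j + 1) = v (j + 1) + w j) :
    ∑ j ∈ Finset.range (n + 2), u j * X j
      = ∑ j ∈ Finset.range (n + 1), (v j * X j + w j * X (j + 1)) := by
  rw [Finset.sum_add_distrib]
  rw [Finset.sum_range_succ' (fun j => u j * X j) (n + 1)]
  rw [Finset.sum_range_succ (fun j => u (j + 1) * X (j + 1)) n]
  rw [Finset.sum_range_succ' (fun j => v j * X j) n]
  rw [Finset.sum_range_succ (fun j => w j * X (j + 1)) n]
  have hS : ∑ j ∈ Finset.range n, u (j + 1) * X (j + 1)
      = ∑ j ∈ Finset.range n, (v (j + 1) * X (j + 1) + w j * X (j + 1)) := by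
    refine Finset.sum_congr rfl fun j hj => ?_
    rw [hmid j (Finset.mem_range.mp hj)]; ring
  rw [hS, Finset.sum_add_distrib, h0, hlast]
  ring

lemma hasDerivAt_FF (a : ℂ) (m n : ℕ) {z : ℂ} (hz : (1 : ℂ) - z ≠ 0) :
    HasDerivAt (FF a m n) (FF a m (n + 1) z) z := by
  have h1 : HasDerivAt (fun z : ℂ => 1 - z) (-1) z := by
    simpa using (hasDerivAt_id z).const_sub 1
  have hE : HasDerivAt (fun z : ℂ => Complex.exp (a / (1 - z)))
      (Complex.exp (a / (1 - z)) * (a * (1 - z) ^ (-2 : ℤ))) z := by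
    have hw : HasDerivAt (fun z : ℂ => a / (1 - z)) (a * (1 - z) ^ (-2 : ℤ)) z := by
      have := (((hasDerivAt_zpow (-1) (1 - z) (Or.inl hz)).comp z h1).const_mul a)
      replace this : HasDerivAt (fun y => a * ((fun x : ℂ => x ^ (-1 : ℤ)) ∘ HSub.hSub 1) y)
          (a * (((-1 : ℤ) : ℂ) * (1 - z) ^ ((-1 : ℤ) - 1) * -1)) z := this
      convert this using 1
      · funext w; simp [div_eq_mul_inv, zpow_neg]
      · push_cast
        ring
    exact hw.cexp
  have key : ∀ j ∈ Finset.range (n + 1),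
      HasDerivAt (fun z : ℂ => (n.choose j : ℂ) * (∏ i ∈ Finset.Ico (j + m) (n + m), (i : ℂ)) *
          (1 - z) ^ (-((m : ℤ) + n + j)) * a ^ j * Complex.exp (a / (1 - z)))
        (((n.choose j : ℂ) * (∏ i ∈ Finset.Ico (j + m) (n + m), (i : ℂ)) *
            ((-((m : ℤ) + n + j) : ℤ) * (1 - z) ^ (-((m : ℤ) + n + j) - 1) * (-1)) * a ^ j) *
            Complex.exp (a / (1 - z)) +
          ((n.choose j : ℂ) * (∏ i ∈ Finset.Ico (j + m) (n + m), (i : ℂ)) *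
            (1 - z) ^ (-((m : ℤ) + n + j)) * a ^ j) *
            (Complex.exp (a / (1 - z)) * (a * (1 - z) ^ (-2 : ℤ)))) z := by
    intro j _
    have hu : HasDerivAt (fun z : ℂ => (1 - z) ^ (-((m : ℤ) + n + j)))
        ((-((m : ℤ) + n + j) : ℤ) * (1 - z) ^ (-((m : ℤ) + n + j) - 1) * (-1)) z :=
      (hasDerivAt_zpow _ (1 - z) (Or.inl hz)).comp z h1
    exact (((hu.const_mul _).mul_const (a ^ j)).mul hE)
  have hsum := HasDerivAt.fun_sum key
  refine hsum.congr_deriv (Eq.symm ?_)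
  -- now the algebraic identity
  have halg : ∀ j : ℕ,
      ((n.choose j : ℂ) * (∏ i ∈ Finset.Ico (j + m) (n + m), (i : ℂ)) *
            ((-((m : ℤ) + n + j) : ℤ) * (1 - z) ^ (-((m : ℤ) + n + j) - 1) * (-1)) * a ^ j) *
            Complex.exp (a / (1 - z)) +
          ((n.choose j : ℂ) * (∏ i ∈ Finset.Ico (j + m) (n + m), (i : ℂ)) *
            (1 - z) ^ (-((m : ℤ) + n + j)) * a ^ j) *
            (Complex.exp (a / (1 - z)) * (a * (1 - z) ^ (-2 : ℤ)))
        = ((n.choose j : ℂ) * (∏ i ∈ Finset.Ico (j + m) (n + m), (i : ℂ)) * ((m : ℂ) + n + j)) *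
            ((1 - z) ^ (-((m : ℤ) + (n + 1) + j)) * a ^ j * Complex.exp (a / (1 - z))) +
          ((n.choose j : ℂ) * (∏ i ∈ Finset.Ico (j + m) (n + m), (i : ℂ))) *
            ((1 - z) ^ (-((m : ℤ) + (n + 1) + (j + 1))) * a ^ (j + 1) *
              Complex.exp (a / (1 - z))) := by
    intro j
    have e1 : (-((m : ℤ) + n + j) - 1) = -((m : ℤ) + (n + 1) + j) := by push_cast; ring
    have e2 : (1 - z) ^ (-((m : ℤ) + (n + 1) + (j + 1)))
        = (1 - z) ^ (-((m : ℤ) + n + j)) * (1 - z) ^ (-2 : ℤ) := by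
      rw [← zpow_add₀ hz]; congr 1; push_cast; ring
    rw [e1, e2]
    push_cast
    ring
  refine Eq.trans ?_ (Finset.sum_congr rfl fun j _ => (halg j).symm)
  have main := sum_id n
    (fun j => ((n + 1).choose j : ℂ) * (∏ i ∈ Finset.Ico (j + m) (n + 1 + m), (i : ℂ)))
    (fun j => (n.choose j : ℂ) * (∏ i ∈ Finset.Ico (j + m) (n + m), (i : ℂ)) * ((m : ℂ) + n + j))
    (fun j => (n.choose j : ℂ) * (∏ i ∈ Finset.Ico (j + m) (n + m), (i : ℂ)))
    (fun j => (1 - z) ^ (-((m : ℤ) + (n + 1) + j)) * a ^ j * Complex.exp (a / (1 - z)))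
    ?_ ?_ ?_
  · beta_reduce at main
    rw [FF]
    refine Eq.trans (Finset.sum_congr rfl fun j hj => ?_) main
    have : (-((m : ℤ) + ↑(n + 1) + j)) = -((m : ℤ) + (n + 1) + j) := by push_cast; ring
    rw [this]
    ring
  · -- h0
    simp only [Nat.choose_zero_right, Nat.cast_one, one_mul, Nat.zero_add, Nat.cast_zero]
    rw [show n + 1 + m = (n + m) + 1 by omega,
      Finset.prod_Ico_succ_top (Nat.le_add_left m n) (fun i => (i : ℂ))]
    push_cast
    ring
  · -- hlast
    have h1 : n + 1 + m = (n + 1) + m := rfl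
    simp [Finset.Ico_self]
  · -- hmid
    intro j hj
    beta_reduce
    rw [show n + 1 + m = (n + m) + 1 by omega,
      Finset.prod_Ico_succ_top (by omega : j + 1 + m ≤ n + m) (fun i => (i : ℂ)),
      Finset.prod_eq_prod_Ico_succ_bot (by omega : j + m < n + m) (fun i => (i : ℂ)),
      show j + m + 1 = j + 1 + m by omega]
    have hc := nat_key (m := m) n j hj
    have hc' : (((n + 1).choose (j + 1) : ℂ) * ((n : ℂ) + m))
        = (n.choose (j + 1) : ℂ) * ((m : ℂ) + n + (j + 1)) + (n.choose j : ℂ) * ((j : ℂ) + m) := by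
      have := congrArg (fun t : ℕ => (t : ℂ)) hc
      push_cast at this
      linear_combination this
    push_cast
    linear_combination (∏ i ∈ Finset.Ico (j + 1 + m) (n + m), (i : ℂ)) * hc'

lemma iter_eq (a : ℂ) (m : ℕ) (n : ℕ) : ∀ z : ℂ, z ≠ 1 →
    iteratedDeriv n (fun z : ℂ => (1 - z) ^ (-(m : ℤ)) * Complex.exp (a / (1 - z))) z
      = FF a m n z := by
  induction n with
  | zero =>
      intro z hz
      simp [FF, iteratedDeriv_zero]
  | succ n ih =>
      intro z hz
      rw [iteratedDeriv_succ]
      have hmem : z ∈ ({1}ᶜ : Set ℂ) := by simpa using hz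
      have hev : iteratedDeriv n (fun z : ℂ => (1 - z) ^ (-(m : ℤ)) *
          Complex.exp (a / (1 - z))) =ᶠ[nhds z] FF a m n := by
        filter_upwards [isOpen_compl_singleton.mem_nhds hmem] with w hw
        exact ih w hw
      rw [hev.deriv_eq]
      exact (hasDerivAt_FF a m n (sub_ne_zero.mpr (Ne.symm hz))).deriv

/-- Formula (3.11): the `n`-th derivative at `z = 0` of `z ↦ (1-z)^{-m} p^{-k/(1-z)}` equals
`p^{-k} ∑_{j=0}^n C(n,j) (n+m-1)(n+m-2)⋯(j+m) (-k log p)^j`. -/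
theorem stmt4 (m k : ℕ) (hm : 1 ≤ m) (hk : 1 ≤ k) (p : ℕ) (hp : p.Prime)
    (n : ℕ) (hn : 1 ≤ n) :
    iteratedDeriv n
        (fun z : ℂ => (1 - z) ^ (-(m : ℤ)) *
          Complex.exp (-((k : ℂ) * Real.log p) / (1 - z))) 0 =
      (p : ℂ) ^ (-(k : ℤ)) *
        ∑ j ∈ Finset.range (n + 1), (n.choose j : ℂ) *
          (∏ i ∈ Finset.Ico (j + m) (n + m), (i : ℂ)) *
          (-((k : ℂ) * Real.log p)) ^ j := by
  set a : ℂ := -((k : ℂ) * Real.log p) with ha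
  have h0 := iter_eq a m n 0 (by norm_num)
  rw [h0]
  have hexp : Complex.exp a = (p : ℂ) ^ (-(k : ℤ)) := by
    have hp0 : (0 : ℝ) < p := by exact_mod_cast hp.pos
    rw [ha, Complex.exp_neg]
    have : Complex.exp ((k : ℂ) * (Real.log p : ℂ)) = ((p : ℝ) : ℂ) ^ k := by
      rw [Complex.exp_nat_mul, ← Complex.ofReal_exp, Real.exp_log hp0]
    rw [this]
    push_cast
    rw [zpow_neg, zpow_natCast]
  rw [FF]
  rw [Finset.mul_sum]
  refine Finset.sum_congr rfl fun j hj => ?_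
  simp only [sub_zero, one_zpow, div_one]
  rw [hexp]
  ring
end
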